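/- arXiv:2404.17951 — 7 statements merged into one kernel-verified Lean document; each statement's English description precedes it below -/
import Mathlib

section
/- Let d ≥ 1, let μ₁, μ₂ ∈ ℝ^d, and let Σ₁, Σ₂ be symmetric positive definite real d×d matrices. Define D_CS = (1/2)·(μ₂−μ₁)ᵀ(Σ₁+Σ₂)⁻¹(μ₂−μ₁) + (1/2)·ln( det(Σ₁+Σ₂) / (2^d · √(det Σ₁ · det Σ₂)) ), D_KL(1‖2) = (1/2)·( tr(Σ₂⁻¹Σ₁) − d + (μ₂−μ₁)ᵀΣ₂⁻¹(μ₂−μ₁) + ln(det Σ₂ / det Σ₁) ), and D_KL(2‖1) = (1/2)·( tr(Σ₁⁻¹Σ₂) − d + (μ₁−μ₂)ᵀΣ₁⁻¹(μ₁−μ₂) + ln(det Σ₁ / det Σ₂) ). Then D_CS ≤ min(D_KL(1‖2), D_KL(2‖1)). -/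
open Matrix Real Finset

lemma cs_scalar_ineq {x : ℝ} (hx : 0 < x) :
    Real.log (1 + x) ≤ x - 1 + Real.log 2 - (1/2) * Real.log x := by
  have h1 : Real.log ((1+x)/2) ≤ (1+x)/2 - 1 :=
    Real.log_le_sub_one_of_pos (by positivity)
  have h2 : Real.log x ≤ x - 1 := Real.log_le_sub_one_of_pos hx
  have h3 : Real.log ((1+x)/2) = Real.log (1+x) - Real.log 2 :=
    Real.log_div (by positivity) two_ne_zero
  linarith

lemma cs_posdef_conj {d : ℕ} {A B : Matrix (Fin d) (Fin d) ℝ} (hA : A.PosDef)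
    (hB : IsUnit B.det) : (Bᴴ * A * B).PosDef := by
  refine Matrix.PosDef.of_dotProduct_mulVec_pos (Matrix.isHermitian_conjTranspose_mul_mul B hA.1) (fun x hx => ?_)
  have hBx : B *ᵥ x ≠ 0 := by
    have hinj := Matrix.mulVec_injective_iff_isUnit.mpr ((Matrix.isUnit_iff_isUnit_det B).mpr hB)
    exact (hinj.ne_iff' (Matrix.mulVec_zero B)).mpr hx
  have := hA.dotProduct_mulVec_pos hBx
  have hrw : star x ⬝ᵥ ((Bᴴ * A * B) *ᵥ x) = star (B *ᵥ x) ⬝ᵥ (A *ᵥ (B *ᵥ x)) := by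
    rw [← Matrix.mulVec_mulVec, ← Matrix.mulVec_mulVec, Matrix.dotProduct_mulVec,
      Matrix.vecMul_conjTranspose, star_star]
  rw [hrw]
  exact this

lemma cs_trace_eq_sum {d : ℕ} {A : Matrix (Fin d) (Fin d) ℝ} (hA : A.IsHermitian) :
    A.trace = ∑ i, hA.eigenvalues i := by
  conv_lhs => rw [hA.spectral_theorem, Unitary.conjStarAlgAut_apply]
  rw [Matrix.trace_mul_cycle, Unitary.coe_star_mul_self, Matrix.one_mul,
    Matrix.trace_diagonal]
  simp

lemma cs_det_one_add {d : ℕ} {A : Matrix (Fin d) (Fin d) ℝ} (hA : A.IsHermitian) :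
    (1 + A).det = ∏ i, (1 + hA.eigenvalues i) := by
  have hU1 : (hA.eigenvectorUnitary : Matrix (Fin d) (Fin d) ℝ)
      * star (hA.eigenvectorUnitary : Matrix (Fin d) (Fin d) ℝ) = 1 :=
    Unitary.coe_mul_star_self _
  have key : 1 + A = (hA.eigenvectorUnitary : Matrix (Fin d) (Fin d) ℝ)
      * (1 + diagonal (RCLike.ofReal ∘ hA.eigenvalues))
      * star (hA.eigenvectorUnitary : Matrix (Fin d) (Fin d) ℝ) := by
    rw [Matrix.mul_add, Matrix.add_mul, Matrix.mul_one, hU1]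
    conv_lhs => rw [hA.spectral_theorem, Unitary.conjStarAlgAut_apply]
  rw [key, Matrix.det_mul, Matrix.det_mul]
  have hdetU : ((hA.eigenvectorUnitary : Matrix (Fin d) (Fin d) ℝ)).det
      * (star (hA.eigenvectorUnitary : Matrix (Fin d) (Fin d) ℝ)).det = 1 := by
    rw [← Matrix.det_mul, hU1, Matrix.det_one]
  have : ((1 : Matrix (Fin d) (Fin d) ℝ) + diagonal (RCLike.ofReal ∘ hA.eigenvalues)).det
      = ∏ i, (1 + hA.eigenvalues i) := by
    rw [← Matrix.diagonal_one, Matrix.diagonal_add, Matrix.det_diagonal]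
    simp
  rw [this, mul_comm ((hA.eigenvectorUnitary : Matrix (Fin d) (Fin d) ℝ)).det _, mul_assoc,
    hdetU, mul_one]

open scoped MatrixOrder in
lemma cs_logdet_le {d : ℕ} {S₁ S₂ : Matrix (Fin d) (Fin d) ℝ} (h₁ : S₁.PosDef) (h₂ : S₂.PosDef) :
    Real.log ((S₁ + S₂).det / (2 ^ d * Real.sqrt (S₁.det * S₂.det)))
      ≤ (S₂⁻¹ * S₁).trace - d + Real.log (S₂.det / S₁.det) := by
  set R := CFC.sqrt S₂ with hRdef
  have hRR : R * R = S₂ := CFC.sqrt_mul_sqrt_self S₂ h₂.posSemidef.nonneg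
  have hRh : R.IsHermitian := (CFC.sqrt_nonneg S₂).posSemidef.1
  have hRdet : IsUnit R.det := by
    refine isUnit_iff_ne_zero.mpr (fun h => ?_)
    have : S₂.det = 0 := by rw [← hRR, Matrix.det_mul, h, mul_zero]
    exact h₂.det_pos.ne' this
  have hRinvdet : IsUnit R⁻¹.det := R.isUnit_nonsing_inv_det hRdet
  have hRinvh : R⁻¹.conjTranspose = R⁻¹ := by
    rw [Matrix.conjTranspose_nonsing_inv, hRh.eq]
  set A := R⁻¹ * S₁ * R⁻¹ with hAdef
  have hApd : A.PosDef := by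
    have := cs_posdef_conj h₁ hRinvdet
    rwa [hRinvh] at this
  have hAh : A.IsHermitian := hApd.1
  have hRAR : R * A * R = S₁ := by
    rw [hAdef, ← Matrix.mul_assoc, ← Matrix.mul_assoc, Matrix.mul_nonsing_inv _ hRdet,
      Matrix.one_mul, Matrix.mul_assoc, Matrix.nonsing_inv_mul _ hRdet, Matrix.mul_one]
  have hS12 : S₁ + S₂ = R * (1 + A) * R := by
    rw [Matrix.mul_add, Matrix.add_mul, Matrix.mul_one, hRR, hRAR, add_comm]
  have hRdet2 : R.det * R.det = S₂.det := by rw [← Matrix.det_mul, hRR]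
  have hdet12 : (S₁ + S₂).det = S₂.det * (1 + A).det := by
    rw [hS12, Matrix.det_mul, Matrix.det_mul, ← hRdet2]
    ring
  have hdetS1 : S₁.det = S₂.det * A.det := by
    rw [← hRAR, Matrix.det_mul, Matrix.det_mul, ← hRdet2]
    ring
  have htrace : (S₂⁻¹ * S₁).trace = A.trace := by
    rw [hAdef, Matrix.trace_mul_cycle, ← Matrix.mul_inv_rev, hRR]
  -- eigenvalues
  have hevpos : ∀ i, 0 < hAh.eigenvalues i := fun i => hApd.eigenvalues_pos i
  have hdetA : A.det = ∏ i, hAh.eigenvalues i := by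
    have := hAh.det_eq_prod_eigenvalues
    simpa using this
  have htrA : A.trace = ∑ i, hAh.eigenvalues i := cs_trace_eq_sum hAh
  have hdet1A : (1 + A).det = ∏ i, (1 + hAh.eigenvalues i) := cs_det_one_add hAh
  -- positivity facts
  have ha : (0:ℝ) < S₂.det := h₂.det_pos
  have hb : (0:ℝ) < S₁.det := h₁.det_pos
  -- log identities
  have hlogdetA : Real.log A.det = ∑ i, Real.log (hAh.eigenvalues i) := by
    rw [hdetA, Real.log_prod]
    exact fun i _ => (hevpos i).ne'
  have hlogdet1A : Real.log (1 + A).det = ∑ i, Real.log (1 + hAh.eigenvalues i) := by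
    rw [hdet1A, Real.log_prod]
    exact fun i _ => ne_of_gt (by linarith [hevpos i])
  have hlogS1 : Real.log S₁.det = Real.log S₂.det + ∑ i, Real.log (hAh.eigenvalues i) := by
    rw [hdetS1, Real.log_mul ha.ne' hApd.det_pos.ne', hlogdetA]
  have hdet1Apos : (0:ℝ) < (1 + A).det := by
    rw [hdet1A]
    exact Finset.prod_pos (fun i _ => by have := hevpos i; linarith)
  have hlog12 : Real.log (S₁ + S₂).det
      = Real.log S₂.det + ∑ i, Real.log (1 + hAh.eigenvalues i) := by
    rw [hdet12, Real.log_mul ha.ne' hdet1Apos.ne', hlogdet1A]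
  have hLHS : Real.log ((S₁ + S₂).det / (2 ^ d * Real.sqrt (S₁.det * S₂.det)))
      = Real.log (S₁ + S₂).det - ((d:ℝ) * Real.log 2
        + (1/2) * (Real.log S₁.det + Real.log S₂.det)) := by
    have hsq : 0 < Real.sqrt (S₁.det * S₂.det) := Real.sqrt_pos.mpr (mul_pos hb ha)
    rw [Real.log_div (h₁.add h₂).det_pos.ne' (by positivity),
      Real.log_mul (by positivity) hsq.ne', Real.log_pow, Real.log_sqrt (mul_pos hb ha).le,
      Real.log_mul hb.ne' ha.ne']
    ring
  have hRHSlog : Real.log (S₂.det / S₁.det) = Real.log S₂.det - Real.log S₁.det :=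
    Real.log_div ha.ne' hb.ne'
  -- the key summed inequality
  have hsum : ∑ i, Real.log (1 + hAh.eigenvalues i)
      ≤ ∑ i, (hAh.eigenvalues i - 1 + Real.log 2 - (1/2) * Real.log (hAh.eigenvalues i)) :=
    Finset.sum_le_sum (fun i _ => cs_scalar_ineq (hevpos i))
  have hsum' : ∑ i, (hAh.eigenvalues i - 1 + Real.log 2 - (1/2) * Real.log (hAh.eigenvalues i))
      = (∑ i, hAh.eigenvalues i) - (d:ℝ) + (d:ℝ) * Real.log 2
        - (1/2) * ∑ i, Real.log (hAh.eigenvalues i) := by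
    rw [Finset.sum_sub_distrib, Finset.sum_add_distrib, Finset.sum_sub_distrib,
      Finset.sum_const, Finset.sum_const, Finset.mul_sum]
    simp [Finset.card_univ]
  rw [hLHS, hRHSlog, htrace, htrA, hlog12, hlogS1]
  rw [hsum'] at hsum
  linarith
lemma cs_quad_le {d : ℕ} {A B : Matrix (Fin d) (Fin d) ℝ} (hA : A.PosDef) (hB : B.PosDef)
    (v : Fin d → ℝ) : v ⬝ᵥ ((A + B)⁻¹ *ᵥ v) ≤ v ⬝ᵥ (B⁻¹ *ᵥ v) := by
  have hC : (A + B).PosDef := hA.add hB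
  have hCd : IsUnit (A + B).det := isUnit_iff_ne_zero.mpr hC.det_pos.ne'
  have hBd : IsUnit B.det := isUnit_iff_ne_zero.mpr hB.det_pos.ne'
  have hBt : Bᵀ = B := by
    rw [← Matrix.conjTranspose_eq_transpose_of_trivial]; exact hB.isHermitian.eq
  set y := (A + B)⁻¹ *ᵥ v with hy
  set z := B⁻¹ *ᵥ v with hz
  have hvy : (A + B) *ᵥ y = v := by
    rw [hy, mulVec_mulVec, Matrix.mul_nonsing_inv _ hCd, one_mulVec]
  have hvz : B *ᵥ z = v := by
    rw [hz, mulVec_mulVec, Matrix.mul_nonsing_inv _ hBd, one_mulVec]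
  have hpos : 0 ≤ (y - z) ⬝ᵥ (B *ᵥ (y - z)) := by
    have := hB.posSemidef.dotProduct_mulVec_nonneg (y - z); simpa using this
  have hApos : 0 ≤ y ⬝ᵥ (A *ᵥ y) := by
    have := hA.posSemidef.dotProduct_mulVec_nonneg y; simpa using this
  have hsym : z ⬝ᵥ (B *ᵥ y) = v ⬝ᵥ y := by
    rw [dotProduct_mulVec, ← Matrix.mulVec_transpose, hBt, hvz]
  have hyBz : y ⬝ᵥ (B *ᵥ z) = y ⬝ᵥ v := by rw [hvz]
  have hzBz : z ⬝ᵥ (B *ᵥ z) = z ⬝ᵥ v := by rw [hvz]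
  have hexp : (y - z) ⬝ᵥ (B *ᵥ (y - z))
      = y ⬝ᵥ (B *ᵥ y) - y ⬝ᵥ v - v ⬝ᵥ y + z ⬝ᵥ v := by
    rw [Matrix.mulVec_sub, sub_dotProduct, dotProduct_sub, dotProduct_sub, hsym, hyBz, hzBz]
    ring
  have hvyq : v ⬝ᵥ y = y ⬝ᵥ (A *ᵥ y) + y ⬝ᵥ (B *ᵥ y) := by
    rw [← hvy, dotProduct_comm, Matrix.add_mulVec, dotProduct_add]
  have h1 : y ⬝ᵥ v = v ⬝ᵥ y := dotProduct_comm _ _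
  have h2 : z ⬝ᵥ v = v ⬝ᵥ z := dotProduct_comm _ _
  linarith

lemma cs_key {d : ℕ} (μ₁ μ₂ : Fin d → ℝ) {S₁ S₂ : Matrix (Fin d) (Fin d) ℝ}
    (h₁ : S₁.PosDef) (h₂ : S₂.PosDef) :
    (1/2) * ((μ₂ - μ₁) ⬝ᵥ ((S₁ + S₂)⁻¹ *ᵥ (μ₂ - μ₁)))
      + (1/2) * Real.log ((S₁ + S₂).det / (2 ^ d * Real.sqrt (S₁.det * S₂.det)))
    ≤ (1/2) * ((S₂⁻¹ * S₁).trace - (d : ℝ) + (μ₂ - μ₁) ⬝ᵥ (S₂⁻¹ *ᵥ (μ₂ - μ₁))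
        + Real.log (S₂.det / S₁.det)) := by
  have hq := cs_quad_le h₁ h₂ (μ₂ - μ₁)
  have hl := cs_logdet_le h₁ h₂
  linarith

/-- Theorem 1: the Cauchy-Schwarz divergence between two multivariate Gaussians
(in closed form) is bounded by the minimum of the forward and reverse KL divergences. -/
theorem cs_divergence_le_min_kl (d : ℕ) (hd : 1 ≤ d) (μ₁ μ₂ : Fin d → ℝ)
    (S₁ S₂ : Matrix (Fin d) (Fin d) ℝ) (h₁ : S₁.PosDef) (h₂ : S₂.PosDef) :
    (1/2) * ((μ₂ - μ₁) ⬝ᵥ ((S₁ + S₂)⁻¹ *ᵥ (μ₂ - μ₁)))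
      + (1/2) * Real.log ((S₁ + S₂).det / (2 ^ d * Real.sqrt (S₁.det * S₂.det)))
    ≤ min
      ((1/2) * ((S₂⁻¹ * S₁).trace - (d : ℝ) + (μ₂ - μ₁) ⬝ᵥ (S₂⁻¹ *ᵥ (μ₂ - μ₁))
        + Real.log (S₂.det / S₁.det)))
      ((1/2) * ((S₁⁻¹ * S₂).trace - (d : ℝ) + (μ₁ - μ₂) ⬝ᵥ (S₁⁻¹ *ᵥ (μ₁ - μ₂))
        + Real.log (S₁.det / S₂.det))) := by
  refine le_min (cs_key μ₁ μ₂ h₁ h₂) ?_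
  have h := cs_key μ₂ μ₁ h₂ h₁
  rw [add_comm S₂ S₁, mul_comm S₂.det S₁.det] at h
  have hv : (μ₁ - μ₂) ⬝ᵥ ((S₁ + S₂)⁻¹ *ᵥ (μ₁ - μ₂))
      = (μ₂ - μ₁) ⬝ᵥ ((S₁ + S₂)⁻¹ *ᵥ (μ₂ - μ₁)) := by
    rw [show μ₁ - μ₂ = -(μ₂ - μ₁) from (neg_sub _ _).symm, Matrix.mulVec_neg,
      dotProduct_neg, neg_dotProduct, neg_neg]
  rw [hv] at h
  exact h
end

section
/- Let dₓ, d_t ≥ 1 and let Σ be a symmetric positive definite real (dₓ+d_t)×(dₓ+d_t) matrix written in block form Σ = [[Σₓ, Σₓₜ],[Σₓₜᵀ, Σₜ]] with Σₓ of size dₓ×dₓ and Σₜ of size d_t×d_t. Let D = [[Σₓ, 0],[0, Σₜ]] be the corresponding block-diagonal matrix and d = dₓ + d_t. Then (1/2)·ln( det(Σ + D) / (2^d · √(det Σ · det D)) ) ≤ (1/2)·ln( det D / det Σ ), where det D = det Σₓ · det Σₜ. (The left side is the Cauchy-Schwarz divergence between N(μ,Σ) and N(μ,D), i.e., the CS quadratic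 mutual information of jointly Gaussian (x,t); the right side is their Shannon mutual information.) -/
open Matrix Real

section Aux
variable {m n : Type*} [Fintype m] [Fintype n] [DecidableEq m] [DecidableEq n]


lemma one_le_det_one_add {M : Matrix n n ℝ} (hM : M.PosSemidef) :
    1 ≤ (1 + M).det := by
  have h := hM.1
  set U : Matrix n n ℝ := (Matrix.IsHermitian.eigenvectorUnitary h : Matrix n n ℝ) with hUdef
  have hU : U * star U = 1 :=
    (Matrix.mem_unitaryGroup_iff).mp (Matrix.IsHermitian.eigenvectorUnitary h).2
  have hspec := by
    have := Matrix.IsHermitian.spectral_theorem h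
    simpa only [Unitary.conjStarAlgAut_apply, Unitary.coe_star] using this
  have key : 1 + M = U * (1 + Matrix.diagonal (RCLike.ofReal ∘ h.eigenvalues)) * star U := by
    rw [Matrix.mul_add, Matrix.add_mul, Matrix.mul_one, hU, ← hspec]
  have hdetU : det U * det (star U) = 1 := by rw [← det_mul, hU, det_one]
  have hd : (1 : Matrix n n ℝ) + Matrix.diagonal (RCLike.ofReal ∘ h.eigenvalues)
      = Matrix.diagonal (fun i => 1 + h.eigenvalues i) := by
    rw [← Matrix.diagonal_one, Matrix.diagonal_add]
    congr 1
  have : (1 + M).det = (Matrix.diagonal (fun i => 1 + h.eigenvalues i)).det := by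
    rw [key, det_mul, det_mul, hd]
    calc det U * det (Matrix.diagonal fun i => 1 + h.eigenvalues i) * det (star U)
        = det U * det (star U) * det (Matrix.diagonal fun i => 1 + h.eigenvalues i) := by ring
      _ = _ := by rw [hdetU, one_mul]
  rw [this, det_diagonal]
  calc (1:ℝ) = ∏ _i : n, 1 := by simp
    _ ≤ ∏ i : n, (1 + h.eigenvalues i) :=
      Finset.prod_le_prod (fun i _ => zero_le_one) fun i _ => by
        linarith [hM.eigenvalues_nonneg i]

open scoped MatrixOrder in
lemma det_le_det_add {A B : Matrix n n ℝ} (hA : A.PosDef) (hB : B.PosSemidef) :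
    A.det ≤ (A + B).det := by
  have hdet : IsUnit A.det := isUnit_iff_ne_zero.mpr hA.det_pos.ne'
  have hAinv : (A⁻¹).PosDef := hA.inv
  set R : Matrix n n ℝ := CFC.sqrt (A⁻¹) with hRdef
  have hRR : R * R = A⁻¹ := CFC.sqrt_mul_sqrt_self _ hAinv.posSemidef.nonneg
  have hRH : Rᴴ = R := (CFC.sqrt_nonneg (A⁻¹)).posSemidef.1
  have h1 : A + B = A * (1 + A⁻¹ * B) := by
    rw [Matrix.mul_add, Matrix.mul_one, ← Matrix.mul_assoc,
      Matrix.mul_nonsing_inv A hdet, Matrix.one_mul]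
  have hpsd : (R * B * R).PosSemidef := by
    have := hB.conjTranspose_mul_mul_same R
    rwa [hRH] at this
  have h2 : (1 + A⁻¹ * B).det = (1 + R * B * R).det := by
    rw [← hRR, Matrix.mul_assoc, Matrix.det_one_add_mul_comm, Matrix.mul_assoc]
  have h3 : (1:ℝ) ≤ (1 + A⁻¹ * B).det := by
    rw [h2]; exact one_le_det_one_add hpsd
  calc A.det = A.det * 1 := (mul_one _).symm
    _ ≤ A.det * (1 + A⁻¹ * B).det := by
        exact mul_le_mul_of_nonneg_left h3 hA.det_pos.le
    _ = (A + B).det := by rw [h1, det_mul]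

lemma PosDef.add_posSemidef' {A B : Matrix n n ℝ} (hA : A.PosDef) (hB : B.PosSemidef) :
    (A + B).PosDef := by
  refine posDef_iff_dotProduct_mulVec.mpr ⟨hA.1.add hB.1, fun x hx => ?_⟩
  have h1 := (posDef_iff_dotProduct_mulVec.mp hA).2 hx
  have h2 := hB.dotProduct_mulVec_nonneg x
  simp only [Matrix.add_mulVec, dotProduct_add] at *
  linarith

lemma posSemidef_smul' {B : Matrix n n ℝ} (hB : B.PosSemidef) {c : ℝ} (hc : 0 ≤ c) :
    (c • B).PosSemidef := by
  refine posSemidef_iff_dotProduct_mulVec.mpr ⟨?_, fun x => ?_⟩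
  · unfold Matrix.IsHermitian
    rw [Matrix.conjTranspose_smul, hB.1]
    simp
  · rw [Matrix.smul_mulVec, dotProduct_smul, smul_eq_mul]
    exact mul_nonneg hc (hB.dotProduct_mulVec_nonneg x)

lemma elim_ne_zero_left {x : m → ℝ} (hx : x ≠ 0) : (Sum.elim x 0 : m ⊕ n → ℝ) ≠ 0 := by
  intro h
  exact hx (funext fun i => congrFun h (Sum.inl i))

lemma elim_ne_zero_right {x : n → ℝ} (hx : x ≠ 0) : (Sum.elim 0 x : m ⊕ n → ℝ) ≠ 0 := by
  intro h
  exact hx (funext fun i => congrFun h (Sum.inr i))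

lemma posDef_block₁₁ {A : Matrix m m ℝ} {B : Matrix m n ℝ} {C : Matrix n m ℝ}
    {D : Matrix n n ℝ} (h : (Matrix.fromBlocks A B C D).PosDef) : A.PosDef := by
  refine posDef_iff_dotProduct_mulVec.mpr ⟨?_, fun x hx => ?_⟩
  · have h1 := h.1
    ext i j
    have h2 := congrFun (congrFun h1 (Sum.inl i)) (Sum.inl j)
    simpa [Matrix.conjTranspose_apply] using h2
  · have := (posDef_iff_dotProduct_mulVec.mp h).2 (x := Sum.elim x 0) (elim_ne_zero_left hx)
    simpa [Matrix.fromBlocks_mulVec, Function.star_sumElim, Fintype.sum_sum_type,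
      dotProduct] using this

lemma posDef_block₂₂ {A : Matrix m m ℝ} {B : Matrix m n ℝ} {C : Matrix n m ℝ}
    {D : Matrix n n ℝ} (h : (Matrix.fromBlocks A B C D).PosDef) : D.PosDef := by
  refine posDef_iff_dotProduct_mulVec.mpr ⟨?_, fun x hx => ?_⟩
  · have h1 := h.1
    ext i j
    have h2 := congrFun (congrFun h1 (Sum.inr i)) (Sum.inr j)
    simpa [Matrix.conjTranspose_apply] using h2
  · have := (posDef_iff_dotProduct_mulVec.mp h).2 (x := Sum.elim 0 x) (elim_ne_zero_right hx)
    simpa [Matrix.fromBlocks_mulVec, Function.star_sumElim, Fintype.sum_sum_type,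
      dotProduct] using this

lemma posDef_fromBlocks_diag {A : Matrix m m ℝ} {D : Matrix n n ℝ}
    (hA : A.PosDef) (hD : D.PosDef) : (Matrix.fromBlocks A 0 0 D).PosDef := by
  refine posDef_iff_dotProduct_mulVec.mpr ⟨?_, fun x hx => ?_⟩
  · rw [Matrix.IsHermitian, Matrix.fromBlocks_conjTranspose]
    simp [hA.1.eq, hD.1.eq]
    constructor
    · rw [← Matrix.conjTranspose_eq_transpose_of_trivial]; exact hA.1
    · rw [← Matrix.conjTranspose_eq_transpose_of_trivial]; exact hD.1
  · have hsplit : x = Sum.elim (x ∘ Sum.inl) (x ∘ Sum.inr) := (Sum.elim_comp_inl_inr x).symm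
    have hq : dotProduct (star x) ((Matrix.fromBlocks A 0 0 D) *ᵥ x)
        = dotProduct (star (x ∘ Sum.inl)) (A *ᵥ (x ∘ Sum.inl))
          + dotProduct (star (x ∘ Sum.inr)) (D *ᵥ (x ∘ Sum.inr)) := by
      conv_lhs => rw [hsplit]
      simp [Matrix.fromBlocks_mulVec, Function.star_sumElim, Fintype.sum_sum_type,
        dotProduct]
    rw [hq]
    by_cases h1 : x ∘ Sum.inl = 0
    · have h2 : x ∘ Sum.inr ≠ 0 := by
        intro h2
        apply hx
        rw [hsplit, h1, h2]
        ext (i | i) <;> simp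
      have := (posDef_iff_dotProduct_mulVec.mp hD).2 h2
      have := hA.posSemidef.dotProduct_mulVec_nonneg (x ∘ Sum.inl)
      linarith
    · have := (posDef_iff_dotProduct_mulVec.mp hA).2 h1
      have := hD.posSemidef.dotProduct_mulVec_nonneg (x ∘ Sum.inr)
      linarith

lemma posDef_schur₁₁ {A : Matrix m m ℝ} (B : Matrix m n ℝ) {D : Matrix n n ℝ}
    (hA : A.PosDef) [Invertible A]
    (h : (Matrix.fromBlocks A B Bᴴ D).PosDef) : (D - Bᴴ * A⁻¹ * B).PosDef := by
  refine posDef_iff_dotProduct_mulVec.mpr ⟨?_, ?_⟩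
  · rw [← Matrix.IsHermitian.fromBlocks₁₁ _ _ hA.1]
    exact h.1
  · intro x hx
    have hne : (Sum.elim (-((A⁻¹ * B) *ᵥ x)) x : m ⊕ n → ℝ) ≠ 0 := by
      intro h0
      exact hx (funext fun i => congrFun h0 (Sum.inr i))
    have hq := (posDef_iff_dotProduct_mulVec.mp h).2 hne
    rw [dotProduct_mulVec, Matrix.schur_complement_eq₁₁ B D _ _ hA.1, neg_add_cancel,
      dotProduct_zero, zero_add] at hq
    rw [dotProduct_mulVec]
    exact hq

lemma key_ineq (c α β γ δ : ℝ) (hc : 0 < c) (hα : 0 < α) (hβ : 0 < β) (hγ : 0 < γ)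
    (hδ : 0 < δ) (h1 : δ ≤ β) (h2 : γ ≤ β) :
    (c * (α * δ)) / (c * Real.sqrt ((α * γ) * (α * β))) ≤ (α * β) / (α * γ) := by
  have hs0 : 0 < Real.sqrt ((α * γ) * (α * β)) := Real.sqrt_pos.mpr (by positivity)
  have hs2 : (Real.sqrt ((α * γ) * (α * β))) ^ 2 = (α * γ) * (α * β) :=
    Real.sq_sqrt (by positivity)
  set s := Real.sqrt ((α * γ) * (α * β)) with hsdef
  rw [div_le_div_iff₀ (by positivity) (by positivity)]
  have key : (α ^ 2 * δ * γ) ^ 2 ≤ (α * β * s) ^ 2 := by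
    have expand : (α * β * s) ^ 2 = α ^ 2 * β ^ 2 * ((α * γ) * (α * β)) := by
      rw [mul_pow, hs2]; ring
    rw [expand]
    have A1 : δ * δ * γ ≤ β * β * γ :=
      mul_le_mul_of_nonneg_right (mul_self_le_mul_self hδ.le h1) hγ.le
    have A2 : β * β * γ ≤ β * β * β := mul_le_mul_of_nonneg_left h2 (by positivity)
    nlinarith [mul_le_mul_of_nonneg_left (A1.trans A2)
      (show (0:ℝ) ≤ α ^ 4 * γ by positivity)]
  have hle : α ^ 2 * δ * γ ≤ α * β * s := by
    have hx : 0 ≤ α ^ 2 * δ * γ := by positivity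
    have hy : 0 ≤ α * β * s := by positivity
    exact (pow_le_pow_iff_left₀ hx hy (two_ne_zero)).mp key
  nlinarith [hle, hc]

end Aux

set_option maxHeartbeats 1000000 in
/-- Corollary 1: for jointly Gaussian (x, t), the Cauchy-Schwarz quadratic mutual
information (the CS divergence between the joint Gaussian N(μ,Σ) and the product of
marginals N(μ, diag(Σₓ,Σₜ)), in closed form) is no greater than the Shannon mutual
information (1/2)·ln(det Σₓ · det Σₜ / det Σ), where det D = det Σₓ · det Σₜ. -/
theorem cs_qmi_le_shannon_mi (dx dt : ℕ) (hdx : 1 ≤ dx) (hdt : 1 ≤ dt)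
    (Sx : Matrix (Fin dx) (Fin dx) ℝ) (St : Matrix (Fin dt) (Fin dt) ℝ)
    (Sxt : Matrix (Fin dx) (Fin dt) ℝ)
    (S : Matrix (Fin dx ⊕ Fin dt) (Fin dx ⊕ Fin dt) ℝ)
    (hS : S = Matrix.fromBlocks Sx Sxt Sxtᵀ St)
    (D : Matrix (Fin dx ⊕ Fin dt) (Fin dx ⊕ Fin dt) ℝ)
    (hD : D = Matrix.fromBlocks Sx 0 0 St)
    (hSpd : S.PosDef) :
    (1/2) * Real.log ((S + D).det / (2 ^ (dx + dt) * Real.sqrt (S.det * D.det)))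
      ≤ (1/2) * Real.log (D.det / S.det) ∧ D.det = Sx.det * St.det := by
  subst hS hD
  have hSxt : Sxtᵀ = Sxtᴴ := (Matrix.conjTranspose_eq_transpose_of_trivial Sxt).symm
  have hSx : Sx.PosDef := posDef_block₁₁ hSpd
  have hSt : St.PosDef := posDef_block₂₂ hSpd
  haveI : Invertible Sx := Sx.invertibleOfIsUnitDet (isUnit_iff_ne_zero.mpr hSx.det_pos.ne')
  set K : Matrix (Fin dt) (Fin dt) ℝ := Sxtᵀ * Sx⁻¹ * Sxt with hKdef
  have hK : K.PosSemidef := by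
    rw [hKdef, hSxt]
    exact (hSx.inv.posSemidef).conjTranspose_mul_mul_same Sxt
  have hSchur : (St - K).PosDef := by
    rw [hKdef, hSxt]
    have h' : (Matrix.fromBlocks Sx Sxt Sxtᴴ St).PosDef := by rwa [← hSxt]
    exact posDef_schur₁₁ Sxt hSx h'
  -- determinant of S
  have hdetS : (Matrix.fromBlocks Sx Sxt Sxtᵀ St).det = Sx.det * (St - K).det := by
    rw [Matrix.det_fromBlocks₁₁, Matrix.invOf_eq_nonsing_inv]
  -- determinant of D
  have hdetD : (Matrix.fromBlocks Sx 0 0 St).det = Sx.det * St.det := by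
    rw [Matrix.det_fromBlocks_zero₂₁]
  -- determinant of S + D
  haveI : Invertible ((2:ℝ)) := invertibleOfNonzero two_ne_zero
  haveI hinvSx2 : Invertible ((2:ℝ) • Sx) := by
    apply ((2:ℝ) • Sx).invertibleOfIsUnitDet
    rw [Matrix.det_smul]
    exact isUnit_iff_ne_zero.mpr (mul_pos (by positivity) hSx.det_pos).ne'
  have hsum : Matrix.fromBlocks Sx Sxt Sxtᵀ St + Matrix.fromBlocks Sx 0 0 St
      = Matrix.fromBlocks ((2:ℝ) • Sx) Sxt Sxtᵀ ((2:ℝ) • St) := by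
    rw [Matrix.fromBlocks_add, add_zero, add_zero, ← two_smul ℝ Sx, ← two_smul ℝ St]
  have hinv2 : ((2:ℝ) • Sx)⁻¹ = (2:ℝ)⁻¹ • Sx⁻¹ := by
    rw [Matrix.inv_smul (A := Sx) (2:ℝ) (isUnit_iff_ne_zero.mpr hSx.det_pos.ne'), invOf_eq_inv]
  have hschur2 : (2:ℝ) • St - Sxtᵀ * ((2:ℝ) • Sx)⁻¹ * Sxt
      = (2:ℝ) • (St - (4:ℝ)⁻¹ • K) := by
    rw [hinv2, Matrix.mul_smul, Matrix.smul_mul, smul_sub, smul_smul, hKdef]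
    norm_num
  have hdetSum : (Matrix.fromBlocks Sx Sxt Sxtᵀ St + Matrix.fromBlocks Sx 0 0 St).det
      = 2 ^ (dx + dt) * (Sx.det * (St - (4:ℝ)⁻¹ • K).det) := by
    rw [hsum, Matrix.det_fromBlocks₁₁, Matrix.invOf_eq_nonsing_inv, hschur2,
      Matrix.det_smul, Matrix.det_smul, Fintype.card_fin, Fintype.card_fin, pow_add]
    ring
  -- positivity and monotonicity facts
  have hq : (St - (4:ℝ)⁻¹ • K).PosDef := by
    have hrw : St - (4:ℝ)⁻¹ • K = (St - K) + (3/4 : ℝ) • K := by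
      ext i j
      simp [Matrix.sub_apply, Matrix.add_apply, Matrix.smul_apply]
      ring
    rw [hrw]
    exact PosDef.add_posSemidef' hSchur (posSemidef_smul' hK (by norm_num))
  have hm1 : (St - (4:ℝ)⁻¹ • K).det ≤ St.det := by
    have h := det_le_det_add hq (posSemidef_smul' hK (by norm_num : (0:ℝ) ≤ 4⁻¹))
    rwa [sub_add_cancel] at h
  have hm2 : (St - K).det ≤ St.det := by
    have h := det_le_det_add hSchur hK
    rwa [sub_add_cancel] at h
  refine ⟨?_, hdetD⟩
  have hα := hSx.det_pos
  have hβ := hSt.det_pos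
  have hγ := hSchur.det_pos
  have hδ := hq.det_pos
  have hc : (0:ℝ) < 2 ^ (dx + dt) := by positivity
  apply mul_le_mul_of_nonneg_left _ (by norm_num : (0:ℝ) ≤ 1/2)
  apply Real.log_le_log
  · rw [hdetSum, hdetS, hdetD]
    have hs : 0 < Real.sqrt (Sx.det * (St - K).det * (Sx.det * St.det)) :=
      Real.sqrt_pos.mpr (by positivity)
    exact div_pos (mul_pos hc (mul_pos hα hδ)) (mul_pos hc hs)
  · rw [hdetSum, hdetS, hdetD]
    exact key_ineq _ _ _ _ _ hc hα hβ hγ hδ hm1 hm2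
end

section
/- Let d ≥ 1 be a real number and x > 0 a real number. Then d·ln(1 + x/d) + (d/2)·ln(x/d) − x + d ≤ d·ln 2, with equality if and only if x = d. -/
open Real

lemma key_log_ineq (t : ℝ) (ht : 0 < t) :
    Real.log ((1 + t) / 2) + (1 / 2) * Real.log t ≤ t - 1 ∧
    (Real.log ((1 + t) / 2) + (1 / 2) * Real.log t = t - 1 ↔ t = 1) := by
  have h1 : Real.log ((1 + t) / 2) ≤ (1 + t) / 2 - 1 :=
    Real.log_le_sub_one_of_pos (by linarith)
  have h2 : Real.log t ≤ t - 1 := Real.log_le_sub_one_of_pos ht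
  refine ⟨by linarith, ?_, ?_⟩
  · intro h
    by_contra hne
    have := Real.log_lt_sub_one_of_pos ht hne
    linarith
  · intro h; subst h; norm_num

/-- The scalar inequality used in the proof of Theorem 1:
for real d ≥ 1 and x > 0, d·ln(1+x/d) + (d/2)·ln(x/d) − x + d ≤ d·ln 2,
with equality iff x = d. -/
theorem scalar_log_ineq (d : ℝ) (hd : 1 ≤ d) (x : ℝ) (hx : 0 < x) :
    d * Real.log (1 + x / d) + (d / 2) * Real.log (x / d) - x + d ≤ d * Real.log 2 ∧
    (d * Real.log (1 + x / d) + (d / 2) * Real.log (x / d) - x + d = d * Real.log 2 ↔ x = d) := by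
  have hd0 : (0 : ℝ) < d := by linarith
  set t : ℝ := x / d with htdef
  have ht : 0 < t := div_pos hx hd0
  have hxt : x = t * d := by rw [htdef, div_mul_cancel₀ x hd0.ne']
  have hlog : Real.log (1 + t) = Real.log 2 + Real.log ((1 + t) / 2) := by
    rw [← Real.log_mul two_ne_zero (by positivity)]
    ring_nf
  obtain ⟨hk, hkiff⟩ := key_log_ineq t ht
  have hrw : d * Real.log (1 + t) + (d / 2) * Real.log t - x + d - d * Real.log 2
      = d * (Real.log ((1 + t) / 2) + (1 / 2) * Real.log t - (t - 1)) := by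
    rw [hlog, hxt]; ring
  constructor
  · nlinarith [mul_le_mul_of_nonneg_left hk hd0.le]
  · constructor
    · intro h
      have h0 : d * (Real.log ((1 + t) / 2) + (1 / 2) * Real.log t - (t - 1)) = 0 := by
        rw [← hrw]; linarith
      have h1 : Real.log ((1 + t) / 2) + (1 / 2) * Real.log t = t - 1 := by
        rcases mul_eq_zero.mp h0 with h | h
        · exact absurd h hd0.ne'
        · linarith
      have := hkiff.mp h1
      rw [hxt, this, one_mul]
    · intro h
      have ht1 : t = 1 := by rw [htdef, h, div_self hd0.ne']
      have h1 := hkiff.mpr ht1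
      nlinarith [hrw]
end

section
/- Let d ≥ 1 and let Σ₁, Σ₂ be symmetric positive definite real d×d matrices. Then ln( det(Σ₁+Σ₂) / (2^d · √(det Σ₁ · det Σ₂)) ) ≤ tr(Σ₂⁻¹Σ₁) − d + ln( det Σ₂ / det Σ₁ ). -/
open Matrix Real
open scoped MatrixOrder

/-- For a positive definite real matrix, `log det A ≤ tr A - d`. -/
lemma logdet_le_trace {n : Type*} [Fintype n] [DecidableEq n] {A : Matrix n n ℝ}
    (hA : A.PosDef) : Real.log A.det ≤ A.trace - Fintype.card n := by
  have hH := hA.1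
  have htr : A.trace = ∑ i, hH.eigenvalues i := by
    conv_lhs => rw [hH.spectral_theorem, Unitary.conjStarAlgAut_apply]
    rw [Matrix.trace_mul_cycle,
      Unitary.coe_star_mul_self hH.eigenvectorUnitary, Matrix.one_mul,
      Matrix.trace_diagonal]
    simp [RCLike.ofReal_real_eq_id]
  have hdet : A.det = ∏ i, hH.eigenvalues i := by
    rw [hH.det_eq_prod_eigenvalues]
    simp [RCLike.ofReal_real_eq_id]
  rw [hdet, Real.log_prod (fun i _ => (hA.eigenvalues_pos i).ne'), htr]
  calc ∑ i, Real.log (hH.eigenvalues i)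
      ≤ ∑ i, (hH.eigenvalues i - 1) :=
        Finset.sum_le_sum fun i _ => Real.log_le_sub_one_of_pos (hA.eigenvalues_pos i)
    _ = (∑ i, hH.eigenvalues i) - Fintype.card n := by
        rw [Finset.sum_sub_distrib]; simp [Finset.card_univ]

/-- Conjugation of a positive definite matrix by an invertible matrix is positive definite. -/
lemma posDef_conj {n : Type*} [Fintype n] [DecidableEq n] {A B : Matrix n n ℝ}
    (hA : A.PosDef) (hB : IsUnit B.det) : (Bᴴ * A * B).PosDef := by
  refine PosDef.of_dotProduct_mulVec_pos (isHermitian_conjTranspose_mul_mul B hA.1) fun x hx => ?_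
  have hBu : IsUnit B := (Matrix.isUnit_iff_isUnit_det B).mpr hB
  have hBx : B *ᵥ x ≠ 0 := by
    intro h
    exact hx ((Matrix.mulVec_injective_iff_isUnit.mpr hBu) (h.trans (B.mulVec_zero).symm))
  simpa only [star_mulVec, dotProduct_mulVec, vecMul_vecMul] using hA.dotProduct_mulVec_pos hBx

/-- A positive scalar multiple of a positive definite matrix is positive definite. -/
lemma posDef_smul {n : Type*} [Fintype n] [DecidableEq n] {A : Matrix n n ℝ}
    (hA : A.PosDef) {c : ℝ} (hc : 0 < c) : (c • A).PosDef := by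
  have hHerm : (c • A).IsHermitian := by
    unfold Matrix.IsHermitian
    rw [Matrix.conjTranspose_smul, hA.1.eq]
    simp
  refine PosDef.of_dotProduct_mulVec_pos hHerm fun x hx => ?_
  rw [smul_mulVec, dotProduct_smul]
  exact mul_pos hc (hA.dotProduct_mulVec_pos hx)

/-- The covariance-part inequality (Eqs. (67)–(74)) in the proof of Theorem 1:
twice the Cauchy-Schwarz divergence between equal-mean Gaussians is at most
twice their KL divergence. -/
theorem cov_cs_le_kl (d : ℕ) (hd : 1 ≤ d)
    (S₁ S₂ : Matrix (Fin d) (Fin d) ℝ) (h₁ : S₁.PosDef) (h₂ : S₂.PosDef) :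
    Real.log ((S₁ + S₂).det / (2 ^ d * Real.sqrt (S₁.det * S₂.det)))
      ≤ (S₂⁻¹ * S₁).trace - (d : ℝ) + Real.log (S₂.det / S₁.det) := by
  have hd1 : (0:ℝ) < S₁.det := h₁.det_pos
  have hd2 : (0:ℝ) < S₂.det := h₂.det_pos
  set R := CFC.sqrt S₂ with hRdef
  have hRR : R * R = S₂ := CFC.sqrt_mul_sqrt_self S₂ h₂.posSemidef.nonneg
  have hRH : R.IsHermitian := (CFC.sqrt_nonneg S₂).posSemidef.1
  have hRdet : R.det * R.det = S₂.det := by rw [← Matrix.det_mul, hRR]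
  have hRdet0 : R.det ≠ 0 := by
    intro h; rw [h, mul_zero] at hRdet; exact hd2.ne hRdet
  have hRunit : IsUnit R.det := hRdet0.isUnit
  have hRinv : R * R⁻¹ = 1 := Matrix.mul_nonsing_inv R hRunit
  have hinvR : R⁻¹ * R = 1 := Matrix.nonsing_inv_mul R hRunit
  have hRinvH : R⁻¹.IsHermitian := hRH.inv
  set M := R⁻¹ * S₁ * R⁻¹ with hMdef
  have hMpos : M.PosDef := by
    have := posDef_conj h₁ (B := R⁻¹) (R.isUnit_nonsing_inv_det hRunit)
    rw [hRinvH.eq] at this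
    exact this
  have hS₁eq : R * M * R = S₁ := by
    have : R * (R⁻¹ * S₁ * R⁻¹) * R = (R * R⁻¹) * S₁ * (R⁻¹ * R) := by
      simp only [Matrix.mul_assoc]
    rw [hMdef, this, hRinv, hinvR, Matrix.one_mul, Matrix.mul_one]
  have hsum : S₁ + S₂ = R * (1 + M) * R := by
    rw [Matrix.mul_add, Matrix.add_mul, Matrix.mul_one, hRR, hS₁eq, add_comm]
  have h1M : (1 + M).PosDef := Matrix.PosDef.one.add hMpos
  have h1Mdet : (0:ℝ) < (1 + M).det := h1M.det_pos
  have hMdetpos : (0:ℝ) < M.det := hMpos.det_pos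
  -- determinant identities
  have hdetsum : (S₁ + S₂).det = S₂.det * (1 + M).det := by
    rw [hsum, Matrix.det_mul, Matrix.det_mul, ← hRdet]; ring
  have hdetS₁ : S₁.det = S₂.det * M.det := by
    rw [← hS₁eq, Matrix.det_mul, Matrix.det_mul, ← hRdet]; ring
  -- trace identity
  have hMtr : M.trace = (S₂⁻¹ * S₁).trace := by
    have hS₂inv : S₂⁻¹ = R⁻¹ * R⁻¹ := by rw [← hRR, Matrix.mul_inv_rev]
    rw [hMdef, Matrix.trace_mul_comm (R⁻¹ * S₁) R⁻¹, ← Matrix.mul_assoc, ← hS₂inv]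
  -- key inequality applied to M
  have L1 : Real.log M.det ≤ M.trace - d := by
    simpa using logdet_le_trace hMpos
  -- key inequality applied to (1/2) • (1 + M)
  have L2 : Real.log (1 + M).det ≤ (M.trace - d) / 2 + d * Real.log 2 := by
    have h := logdet_le_trace (posDef_smul h1M (c := (2:ℝ)⁻¹) (by norm_num))
    rw [Matrix.det_smul, Matrix.trace_smul, Fintype.card_fin] at h
    rw [Real.log_mul (by positivity) h1Mdet.ne', Real.log_pow, Real.log_inv] at h
    have htr1M : (1 + M).trace = d + M.trace := by
      rw [Matrix.trace_add, Matrix.trace_one, Fintype.card_fin]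
    rw [htr1M] at h
    simp only [smul_eq_mul] at h
    nlinarith [h]
  -- log relations
  have hlogsum : Real.log (S₁ + S₂).det = Real.log S₂.det + Real.log (1 + M).det := by
    rw [hdetsum, Real.log_mul hd2.ne' h1Mdet.ne']
  have hlogS₁ : Real.log S₁.det = Real.log S₂.det + Real.log M.det := by
    rw [hdetS₁, Real.log_mul hd2.ne' hMdetpos.ne']
  -- expand the goal
  have hsqrt : Real.sqrt (S₁.det * S₂.det) ≠ 0 := by positivity
  rw [Real.log_div (by rw [hdetsum]; positivity) (by positivity),
    Real.log_mul (by positivity) hsqrt,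
    Real.log_sqrt (by positivity), Real.log_mul hd1.ne' hd2.ne',
    Real.log_pow, Real.log_div hd2.ne' hd1.ne']
  have hab : Real.log M.det = Real.log S₁.det - Real.log S₂.det := by linarith [hlogS₁]
  rw [hab] at L1
  linarith [L1, L2, hlogsum, hMtr]
end

section
/- Let (Ω, 𝒜, μ) be a measure space and let a, b : Ω → [0,∞) be measurable functions with 0 < ∫ a dμ < ∞ and 0 < ∫ b dμ < ∞, such that a vanishes μ-a.e. on the set where b vanishes, and such that the integral ∫ a·log(a/b) dμ exists in (−∞, +∞]. Then ( ∫ a dμ )·log( (∫ a dμ)/(∫ b dμ) ) ≤ ∫ a·log(a/b) dμ. -/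
open MeasureTheory

/-- Continuous log-sum inequality (Eq. (85)): for nonnegative integrable a, b with
positive integrals, with a vanishing a.e. where b vanishes, and with the integral
∫ a·log(a/b) existing in (−∞, +∞] (its negative part is integrable; when the integral
is +∞ the claim is trivial, so it is stated for the integrable case),
(∫ a)·log((∫ a)/(∫ b)) ≤ ∫ a·log(a/b). -/
theorem log_sum_inequality_integral {Ω : Type*} [MeasurableSpace Ω] (μ : Measure Ω)
    (a b : Ω → ℝ) (ham : Measurable a) (hbm : Measurable b)
    (ha0 : ∀ ω, 0 ≤ a ω) (hb0 : ∀ ω, 0 ≤ b ω)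
    (hai : Integrable a μ) (hbi : Integrable b μ)
    (hapos : 0 < ∫ ω, a ω ∂μ) (hbpos : 0 < ∫ ω, b ω ∂μ)
    (hvan : ∀ᵐ ω ∂μ, b ω = 0 → a ω = 0)
    (hneg : Integrable (fun ω => min (a ω * Real.log (a ω / b ω)) 0) μ)
    (hint : Integrable (fun ω => a ω * Real.log (a ω / b ω)) μ) :
    (∫ ω, a ω ∂μ) * Real.log ((∫ ω, a ω ∂μ) / (∫ ω, b ω ∂μ))
      ≤ ∫ ω, a ω * Real.log (a ω / b ω) ∂μ := by
  set A := ∫ ω, a ω ∂μ with hA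
  set B := ∫ ω, b ω ∂μ with hB
  set c := A / B with hc
  have hcpos : 0 < c := div_pos hapos hbpos
  -- pointwise a.e. inequality
  have key : ∀ᵐ ω ∂μ, a ω - c * b ω ≤ a ω * Real.log (a ω / b ω) - a ω * Real.log c := by
    filter_upwards [hvan] with ω hv
    rcases eq_or_lt_of_le (ha0 ω) with h0 | hapos'
    · simp [← h0]
      exact mul_nonneg hcpos.le (hb0 ω)
    · have hbpos' : 0 < b ω := by
        rcases eq_or_lt_of_le (hb0 ω) with h0 | h
        · exact absurd (hv h0.symm) (ne_of_gt hapos')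
        · exact h
      have ht : 0 < a ω / (b ω * c) := by positivity
      have := Real.one_sub_inv_le_log_of_pos ht
      have h2 := mul_le_mul_of_nonneg_left this (le_of_lt hapos')
      have hinv : (a ω / (b ω * c))⁻¹ = b ω * c / a ω := by
        rw [inv_div]
      rw [hinv] at h2
      have hlog : Real.log (a ω / (b ω * c)) = Real.log (a ω / b ω) - Real.log c := by
        rw [div_mul_eq_div_div, Real.log_div (by positivity) (ne_of_gt hcpos)]
      rw [hlog] at h2
      calc a ω - c * b ω = a ω * (1 - b ω * c / a ω) := by
            field_simp
        _ ≤ a ω * (Real.log (a ω / b ω) - Real.log c) := h2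
        _ = a ω * Real.log (a ω / b ω) - a ω * Real.log c := by ring
  -- integrate
  have hint2 : Integrable (fun ω => a ω * Real.log (a ω / b ω) - a ω * Real.log c) μ :=
    hint.sub (hai.mul_const _)
  have hint1 : Integrable (fun ω => a ω - c * b ω) μ := hai.sub (hbi.const_mul _)
  have hmono := integral_mono_ae hint1 hint2 key
  rw [integral_sub hai (hbi.const_mul _), integral_sub hint (hai.mul_const _),
    integral_const_mul, integral_mul_const] at hmono
  have hBne : B ≠ 0 := ne_of_gt hbpos
  have : A - c * B = 0 := by rw [hc]; field_simp; ring
  linarith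
end

section
/- Let d ≥ 1, let K ⊆ ℝ^d be a Lebesgue-measurable set with Lebesgue measure |K| satisfying 0 < |K| < ∞, and let p, q : ℝ^d → [0,∞) be measurable functions that are square-integrable over K with ∫_K p > 0, ∫_K q > 0, ∫_K p² > 0, ∫_K q² > 0 and ∫_K p·q > 0, such that p vanishes a.e. on the subset of K where q vanishes and ∫_K p·log(p/q) exists in (−∞, +∞]. Set C₁ = ∫_K p and C₂ = (∫_K p) / ( ∫_K p² · ∫_K q² )^{1/4}. Then C₁ · [ log( (∫_K p² · ∫_K q²)^{1/2} / ∫_K p·q ) − log |K| + 2·log C₂ ] ≤ ∫_K p·log(p/q). -/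
open MeasureTheory

/-- For `t > 0`, `1 - 1/t ≤ log t`. -/
lemma aux_log_ge_one_sub_inv {t : ℝ} (ht : 0 < t) : 1 - 1 / t ≤ Real.log t := by
  have h := Real.log_le_sub_one_of_pos (show (0 : ℝ) < 1 / t by positivity)
  rw [Real.log_div one_ne_zero (ne_of_gt ht), Real.log_one] at h
  linarith

/-- Proposition 5: for square-integrable densities p, q on a bounded-measure set
K ⊆ ℝ^d, with C₁ = ∫_K p and C₂ = ∫_K p / (∫_K p² · ∫_K q²)^{1/4},
C₁·[D_CS − log|K| + 2·log C₂] ≤ D_KL, where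
D_CS = log((∫_K p² · ∫_K q²)^{1/2} / ∫_K p·q) and D_KL = ∫_K p·log(p/q)
(assumed to exist in (−∞, +∞]: its negative part is integrable; the inequality is
stated in the nontrivial case where the integral is finite). -/
theorem cs_kl_general_densities (d : ℕ) (hd : 1 ≤ d)
    (K : Set (Fin d → ℝ)) (hKm : MeasurableSet K)
    (hKpos : 0 < volume K) (hKfin : volume K < ⊤)
    (p q : (Fin d → ℝ) → ℝ) (hpm : Measurable p) (hqm : Measurable q)
    (hp0 : ∀ x, 0 ≤ p x) (hq0 : ∀ x, 0 ≤ q x)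
    (hp2 : MemLp p 2 (volume.restrict K)) (hq2 : MemLp q 2 (volume.restrict K))
    (hppos : 0 < ∫ x in K, p x) (hqpos : 0 < ∫ x in K, q x)
    (hp2pos : 0 < ∫ x in K, p x ^ 2) (hq2pos : 0 < ∫ x in K, q x ^ 2)
    (hpqpos : 0 < ∫ x in K, p x * q x)
    (hvan : ∀ᵐ x ∂(volume.restrict K), q x = 0 → p x = 0)
    (hneg : Integrable (fun x => min (p x * Real.log (p x / q x)) 0) (volume.restrict K))
    (hint : Integrable (fun x => p x * Real.log (p x / q x)) (volume.restrict K)) :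
    (∫ x in K, p x) *
      (Real.log (Real.sqrt ((∫ x in K, p x ^ 2) * (∫ x in K, q x ^ 2)) / ∫ x in K, p x * q x)
        - Real.log ((volume K).toReal)
        + 2 * Real.log ((∫ x in K, p x) / ((∫ x in K, p x ^ 2) * (∫ x in K, q x ^ 2)) ^ ((1 : ℝ) / 4)))
      ≤ ∫ x in K, p x * Real.log (p x / q x) := by
  set P := ∫ x in K, p x with hPdef
  set S := ∫ x in K, p x * q x with hSdef
  set A := ∫ x in K, p x ^ 2 with hAdef
  set B := ∫ x in K, q x ^ 2 with hBdef
  set V := (volume K).toReal with hVdef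
  have hVpos : 0 < V := ENNReal.toReal_pos (ne_of_gt hKpos) (ne_of_lt hKfin)
  have hABpos : 0 < A * B := mul_pos hp2pos hq2pos
  haveI : IsFiniteMeasure (volume.restrict K) :=
    ⟨by rwa [Measure.restrict_apply_univ]⟩
  -- integrability facts
  have hpint : Integrable p (volume.restrict K) := hp2.integrable one_le_two
  have hpqint : Integrable (fun x => p x * q x) (volume.restrict K) := by
    have hdom : Integrable (fun x => (p x ^ 2 + q x ^ 2) / 2) (volume.restrict K) :=
      (hp2.integrable_sq.add hq2.integrable_sq).div_const 2
    refine hdom.mono' ((hpm.mul hqm).aestronglyMeasurable) ?_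
    filter_upwards with x
    have h1 : 0 ≤ (p x - q x) ^ 2 := sq_nonneg _
    have : |p x * q x| = p x * q x := abs_of_nonneg (mul_nonneg (hp0 x) (hq0 x))
    rw [Real.norm_eq_abs, this]
    nlinarith
  -- the comparison function
  set C : ℝ := Real.log (P / V) + Real.log (P / S) with hCdef
  set g : (Fin d → ℝ) → ℝ :=
    fun x => 2 * p x - P / V - (P / S) * (p x * q x) + C * p x with hgdef
  have hgint : Integrable g (volume.restrict K) := by
    exact (((hpint.const_mul 2).sub (integrable_const (P / V))).sub
      (hpqint.const_mul (P / S))).add (hpint.const_mul C)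
  -- pointwise a.e. inequality
  have hle : ∀ᵐ x ∂(volume.restrict K), g x ≤ p x * Real.log (p x / q x) := by
    filter_upwards [hvan] with x hx
    by_cases hpx : p x = 0
    · simp only [hgdef, hpx, mul_zero, zero_mul, sub_zero, add_zero]
      have : 0 < P / V := div_pos hppos hVpos
      simp only [two_mul, add_zero, zero_add, zero_sub, zero_mul, mul_zero]
      nlinarith
    · have hp' : 0 < p x := lt_of_le_of_ne (hp0 x) (Ne.symm hpx)
      have hq' : 0 < q x := by
        rcases lt_or_eq_of_le (hq0 x) with h | h
        · exact h
        · exact absurd (hx h.symm) hpx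
      have hPne : P ≠ 0 := ne_of_gt hppos
      have hSne : S ≠ 0 := ne_of_gt hpqpos
      have hVne : V ≠ 0 := ne_of_gt hVpos
      have e1 : Real.log (p x / q x) =
          Real.log (p x * V / P) - Real.log (q x * P / S) + C := by
        rw [hCdef, Real.log_div hpx (ne_of_gt hq'),
          Real.log_div (by positivity) hPne, Real.log_div (by positivity) hSne,
          Real.log_mul hpx hVne, Real.log_mul (ne_of_gt hq') hPne,
          Real.log_div hPne hVne, Real.log_div hPne hSne]
        ring
      have hA1 : p x - P / V ≤ p x * Real.log (p x * V / P) := by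
        have ht : 0 < p x * V / P := by positivity
        have h := aux_log_ge_one_sub_inv ht
        have h2 : p x * (1 - 1 / (p x * V / P)) ≤ p x * Real.log (p x * V / P) :=
          mul_le_mul_of_nonneg_left h (le_of_lt hp')
        have h3 : p x * (1 - 1 / (p x * V / P)) = p x - P / V := by
          field_simp
        linarith
      have hB1 : p x * Real.log (q x * P / S) ≤ p x * q x * P / S - p x := by
        have ht : 0 < q x * P / S := by positivity
        have h := Real.log_le_sub_one_of_pos ht
        have h2 : p x * Real.log (q x * P / S) ≤ p x * (q x * P / S - 1) :=
          mul_le_mul_of_nonneg_left h (le_of_lt hp')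
        have h3 : p x * (q x * P / S - 1) = p x * q x * P / S - p x := by ring
        linarith
      calc g x = (p x - P / V) - (p x * q x * P / S - p x) + C * p x := by
            simp only [hgdef]; ring
        _ ≤ p x * Real.log (p x * V / P) - p x * Real.log (q x * P / S) + C * p x := by
            linarith
        _ = p x * Real.log (p x / q x) := by rw [e1]; ring
  -- integrate
  have key : ∫ x in K, g x ≤ ∫ x in K, p x * Real.log (p x / q x) :=
    integral_mono_ae hgint hint hle
  -- compute ∫ g
  have hIg : ∫ x in K, g x = C * P := by
    have i1 : Integrable (fun x => 2 * p x) (volume.restrict K) := hpint.const_mul 2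
    have i2 : Integrable (fun _ : Fin d → ℝ => P / V) (volume.restrict K) :=
      integrable_const _
    have i3 : Integrable (fun x => (P / S) * (p x * q x)) (volume.restrict K) :=
      hpqint.const_mul _
    have i4 : Integrable (fun x => C * p x) (volume.restrict K) := hpint.const_mul C
    have e1 : ∫ x in K, g x =
        (∫ x in K, (2 * p x - P / V - (P / S) * (p x * q x))) + ∫ x in K, C * p x :=
      integral_add ((i1.sub i2).sub i3) i4
    have e2 : ∫ x in K, (2 * p x - P / V - (P / S) * (p x * q x)) =
        (∫ x in K, (2 * p x - P / V)) - ∫ x in K, (P / S) * (p x * q x) :=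
      integral_sub (i1.sub i2) i3
    have e3 : ∫ x in K, (2 * p x - P / V) =
        (∫ x in K, 2 * p x) - ∫ x in K, (P / V : ℝ) := integral_sub i1 i2
    have e4 : ∫ x in K, 2 * p x = 2 * P := integral_const_mul 2 p
    have e5 : ∫ x in K, (P / S) * (p x * q x) = (P / S) * S :=
      integral_const_mul (P / S) _
    have e6 : ∫ x in K, C * p x = C * P := integral_const_mul C p
    have e7 : ∫ x in K, (P / V : ℝ) = V * (P / V) := by
      rw [integral_const, measureReal_restrict_apply_univ, smul_eq_mul, measureReal_def, ← hVdef]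
    rw [e1, e2, e3, e4, e5, e6, e7]
    field_simp
    ring
  -- algebraic simplification of the left-hand side
  have hlhs :
      Real.log (Real.sqrt (A * B) / S) - Real.log V
        + 2 * Real.log (P / (A * B) ^ ((1 : ℝ) / 4)) = C := by
    have hSne : S ≠ 0 := ne_of_gt hpqpos
    have hPne : P ≠ 0 := ne_of_gt hppos
    have hVne : V ≠ 0 := ne_of_gt hVpos
    have hsq : Real.sqrt (A * B) ≠ 0 := ne_of_gt (Real.sqrt_pos.mpr hABpos)
    have hr : ((A * B) ^ ((1 : ℝ) / 4) : ℝ) ≠ 0 :=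
      ne_of_gt (Real.rpow_pos_of_pos hABpos _)
    rw [hCdef, Real.log_div hsq hSne, Real.log_sqrt (le_of_lt hABpos),
      Real.log_div hPne hr, Real.log_rpow hABpos,
      Real.log_div hPne hVne, Real.log_div hPne hSne]
    ring
  calc P * (Real.log (Real.sqrt (A * B) / S) - Real.log V
        + 2 * Real.log (P / (A * B) ^ ((1 : ℝ) / 4))) = C * P := by rw [hlhs]; ring
    _ = ∫ x in K, g x := hIg.symm
    _ ≤ ∫ x in K, p x * Real.log (p x / q x) := key
end

section
/- Let d ≥ 1, let μ₁, μ₂ ∈ ℝ^d, and let Σ₁, Σ₂ be symmetric positive definite real d×d matrices. Define the Gaussian densities p(x) = ((2π)^d · det Σ₁)^{-1/2} · exp( −(1/2)·(x−μ₁)ᵀΣ₁⁻¹(x−μ₁) ) and q(x) = ((2π)^d · det Σ₂)^{-1/2} · exp( −(1/2)·(x−μ₂)ᵀΣ₂⁻¹(x−μ₂) ). Then −log( ( ∫_{ℝ^d} p·q dx )² / ( ∫_{ℝ^d} p² dx · ∫_{ℝ^d} q² dx ) ) = (μ₂−μ₁)ᵀ(Σ₁+Σ₂)⁻¹(μ₂−μ₁)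 + log( det(Σ₁+Σ₂) / (2^d · √(det Σ₁ · det Σ₂)) ). -/
open Matrix Real MeasureTheory

lemma base_gauss (d : ℕ) {b : ℝ} (hb : 0 < b) :
    ∫ x : Fin d → ℝ, Real.exp (-b * ∑ i, x i ^ 2) = (π / b) ^ ((d : ℝ) / 2) := by
  have h := GaussianFourier.integral_rexp_neg_mul_sq_norm (V := EuclideanSpace ℝ (Fin d)) hb
  have h2 := ((EuclideanSpace.volume_preserving_symm_measurableEquiv_toLp (Fin d)).symm).integral_comp
    ((MeasurableEquiv.toLp 2 (Fin d → ℝ)).measurableEmbedding)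
    (fun v : EuclideanSpace ℝ (Fin d) => Real.exp (-b * ‖v‖ ^ 2))
  have key : ∀ x : Fin d → ℝ,
      Real.exp (-b * ‖(MeasurableEquiv.toLp 2 (Fin d → ℝ)) x‖ ^ 2)
      = Real.exp (-b * ∑ i, x i ^ 2) := by
    intro x
    congr 1
    rw [EuclideanSpace.norm_eq, Real.sq_sqrt (Finset.sum_nonneg fun i _ => sq_nonneg _)]
    simp only [Real.norm_eq_abs, sq_abs]
    rfl
  simp only [MeasurableEquiv.symm_symm, key] at h2
  rw [h2, h, finrank_euclideanSpace, Fintype.card_fin]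

open scoped MatrixOrder in
lemma gauss_quad (d : ℕ) (M : Matrix (Fin d) (Fin d) ℝ) (hM : M.PosDef) :
    ∫ x : Fin d → ℝ, Real.exp (-(1/2) * (x ⬝ᵥ M *ᵥ x)) =
      Real.sqrt ((2 * π) ^ d / M.det) := by
  classical
  set C := CFC.sqrt M with hCdef
  have hCC : C * C = M := CFC.sqrt_mul_sqrt_self M hM.posSemidef.nonneg
  have hCps : C.PosSemidef := (CFC.sqrt_nonneg M).posSemidef
  have hdetC_sq : C.det * C.det = M.det := by rw [← det_mul, hCC]
  have hdetC_nonneg : 0 ≤ C.det := by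
    rw [hCps.1.det_eq_prod_eigenvalues]
    exact Finset.prod_nonneg fun i _ => hCps.eigenvalues_nonneg i
  have hdetM : 0 < M.det := hM.det_pos
  have hdetC : C.det = Real.sqrt M.det := by
    rw [← hdetC_sq, Real.sqrt_mul_self hdetC_nonneg]
  have hdetC_pos : 0 < C.det := by rw [hdetC]; exact Real.sqrt_pos.2 hdetM
  -- pointwise: x ⬝ᵥ M *ᵥ x = ∑ i, (C *ᵥ x) i ^ 2
  have hpt : ∀ x : Fin d → ℝ, x ⬝ᵥ M *ᵥ x = ∑ i, (C *ᵥ x) i ^ 2 := by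
    intro x
    have hCsym : Cᵀ = C := by
      have := hCps.1
      rwa [Matrix.IsHermitian, conjTranspose_eq_transpose_of_trivial] at this
    rw [← hCC, ← Matrix.mulVec_mulVec, Matrix.dotProduct_mulVec, ← Matrix.mulVec_transpose, hCsym]
    simp [dotProduct, sq]
  -- change of variables
  have hmap : Measure.map (Matrix.toLin' C) volume
      = ENNReal.ofReal (|C.det|⁻¹) • volume := by
    rw [show |C.det|⁻¹ = |C.det⁻¹| by rw [abs_inv]]
    exact Real.map_matrix_volume_pi_eq_smul_volume_pi hdetC_pos.ne'
  have hφmeas : Measurable (Matrix.toLin' C) :=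
    (LinearMap.continuous_on_pi _).measurable
  have hfmeas : AEStronglyMeasurable
      (fun y : Fin d → ℝ => Real.exp (-(1/2) * ∑ i, y i ^ 2))
      (Measure.map (Matrix.toLin' C) volume) := by
    apply Continuous.aestronglyMeasurable
    exact Real.continuous_exp.comp (by continuity)
  have hint := MeasureTheory.integral_map hφmeas.aemeasurable hfmeas
  rw [hmap, integral_smul_measure] at hint
  have hbase := base_gauss d (b := (1:ℝ)/2) one_half_pos
  simp only [Matrix.toLin'_apply] at hint
  have : ∫ x : Fin d → ℝ, Real.exp (-(1/2) * (x ⬝ᵥ M *ᵥ x))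
      = ∫ x : Fin d → ℝ, Real.exp (-(1/2) * ∑ i, (C *ᵥ x) i ^ 2) := by
    congr 1; ext x; rw [hpt]
  rw [this, ← hint, ENNReal.toReal_ofReal (by positivity), hbase]
  rw [abs_of_pos hdetC_pos, hdetC]
  have hpow : (π / (1/2:ℝ)) ^ ((d:ℝ)/2) = √((2*π)^d) := by
    rw [show π / (1/2:ℝ) = 2*π by ring, Real.sqrt_eq_rpow,
      ← Real.rpow_natCast (2*π) d, ← Real.rpow_mul (by positivity), mul_one_div]
  rw [hpow, smul_eq_mul, Real.sqrt_div (by positivity) _, inv_mul_eq_div]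

lemma dot_symm {d : ℕ} {M : Matrix (Fin d) (Fin d) ℝ} (hMs : Mᵀ = M) (u v : Fin d → ℝ) :
    u ⬝ᵥ M *ᵥ v = v ⬝ᵥ M *ᵥ u := by
  rw [Matrix.dotProduct_mulVec, ← Matrix.mulVec_transpose, hMs, dotProduct_comm]

lemma gauss_quad_linear (d : ℕ) (M : Matrix (Fin d) (Fin d) ℝ) (hM : M.PosDef)
    (b : Fin d → ℝ) :
    ∫ x : Fin d → ℝ, Real.exp (-(1/2) * (x ⬝ᵥ M *ᵥ x) + b ⬝ᵥ x) =
      Real.sqrt ((2 * π) ^ d / M.det) * Real.exp ((1/2) * (b ⬝ᵥ M⁻¹ *ᵥ b)) := by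
  classical
  have hMs : Mᵀ = M := by
    have := hM.isHermitian
    rwa [Matrix.IsHermitian, conjTranspose_eq_transpose_of_trivial] at this
  set m : Fin d → ℝ := M⁻¹ *ᵥ b with hm
  have hMm : M *ᵥ m = b := by
    rw [hm, Matrix.mulVec_mulVec, Matrix.mul_nonsing_inv _ hM.det_pos.ne'.isUnit, Matrix.one_mulVec]
  have key : ∀ y : Fin d → ℝ,
      (-(1/2) * ((y + m) ⬝ᵥ M *ᵥ (y + m)) + b ⬝ᵥ (y + m))
      = -(1/2) * (y ⬝ᵥ M *ᵥ y) + (1/2) * (b ⬝ᵥ M⁻¹ *ᵥ b) := by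
    intro y
    have h1 : m ⬝ᵥ M *ᵥ y = y ⬝ᵥ M *ᵥ m := dot_symm hMs m y
    rw [add_dotProduct, dotProduct_add, Matrix.mulVec_add,
      dotProduct_add, dotProduct_add, h1, hMm, ← hm]
    rw [show y ⬝ᵥ b = b ⬝ᵥ y from dotProduct_comm y b,
      show m ⬝ᵥ b = b ⬝ᵥ m from dotProduct_comm m b, hm]
    ring
  have htrans := MeasureTheory.integral_add_right_eq_self
    (μ := (volume : Measure (Fin d → ℝ)))
    (fun x => Real.exp (-(1/2) * (x ⬝ᵥ M *ᵥ x) + b ⬝ᵥ x)) m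
  rw [← htrans]
  simp only [key]
  simp only [Real.exp_add, MeasureTheory.integral_mul_const]
  rw [gauss_quad d M hM]

lemma symm_of_posdef {d : ℕ} {M : Matrix (Fin d) (Fin d) ℝ} (hM : M.PosDef) : Mᵀ = M := by
  have := hM.isHermitian
  rwa [Matrix.IsHermitian, conjTranspose_eq_transpose_of_trivial] at this

lemma mulVec_dot {d : ℕ} {A : Matrix (Fin d) (Fin d) ℝ} (hA : Aᵀ = A) (u v : Fin d → ℝ) :
    (A *ᵥ u) ⬝ᵥ v = u ⬝ᵥ (A *ᵥ v) := by
  rw [dotProduct_comm, Matrix.dotProduct_mulVec, ← Matrix.mulVec_transpose, hA, dotProduct_comm]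

lemma gauss_prod (d : ℕ) (μ₁ μ₂ : Fin d → ℝ) (S₁ S₂ : Matrix (Fin d) (Fin d) ℝ)
    (h₁ : S₁.PosDef) (h₂ : S₂.PosDef) :
    ∫ x : Fin d → ℝ,
      ((Real.sqrt ((2 * π) ^ d * S₁.det))⁻¹ *
        Real.exp (-(1 / 2) * ((x - μ₁) ⬝ᵥ (S₁⁻¹ *ᵥ (x - μ₁))))) *
      ((Real.sqrt ((2 * π) ^ d * S₂.det))⁻¹ *
        Real.exp (-(1 / 2) * ((x - μ₂) ⬝ᵥ (S₂⁻¹ *ᵥ (x - μ₂)))))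
      = (Real.sqrt ((2 * π) ^ d * (S₁ + S₂).det))⁻¹ *
        Real.exp (-(1/2) * ((μ₂ - μ₁) ⬝ᵥ ((S₁ + S₂)⁻¹ *ᵥ (μ₂ - μ₁)))) := by
  classical
  set A := S₁⁻¹ with hA
  set B := S₂⁻¹ with hB
  have hApd : A.PosDef := h₁.inv
  have hBpd : B.PosDef := h₂.inv
  set M := A + B with hM
  have hMpd : M.PosDef := hApd.add hBpd
  have hSpd : (S₁ + S₂).PosDef := h₁.add h₂
  set T := (S₁ + S₂)⁻¹ with hT
  have hAs : Aᵀ = A := symm_of_posdef hApd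
  have hBs : Bᵀ = B := symm_of_posdef hBpd
  have hTs : Tᵀ = T := symm_of_posdef hSpd.inv
  have hd1 : IsUnit S₁.det := h₁.det_pos.ne'.isUnit
  have hd2 : IsUnit S₂.det := h₂.det_pos.ne'.isUnit
  have hdS : IsUnit (S₁ + S₂).det := hSpd.det_pos.ne'.isUnit
  -- decompositions of M
  have hM1 : M = S₁⁻¹ * (S₁ + S₂) * S₂⁻¹ := by
    rw [Matrix.mul_add, Matrix.add_mul, Matrix.nonsing_inv_mul _ hd1, Matrix.one_mul,
      Matrix.mul_assoc, Matrix.mul_nonsing_inv _ hd2, Matrix.mul_one, hM, hA, hB, add_comm]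
  have hM2 : M = S₂⁻¹ * (S₁ + S₂) * S₁⁻¹ := by
    rw [Matrix.mul_add, Matrix.add_mul, Matrix.nonsing_inv_mul _ hd2, Matrix.one_mul,
      Matrix.mul_assoc, Matrix.mul_nonsing_inv _ hd1, Matrix.mul_one, hM, hA, hB, add_comm]
  have hMinv1 : M⁻¹ = S₂ * T * S₁ := by
    rw [hM1, Matrix.mul_inv_rev, Matrix.mul_inv_rev, Matrix.nonsing_inv_nonsing_inv _ hd1,
      Matrix.nonsing_inv_nonsing_inv _ hd2, hT, Matrix.mul_assoc]
  have hMinv2 : M⁻¹ = S₁ * T * S₂ := by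
    rw [hM2, Matrix.mul_inv_rev, Matrix.mul_inv_rev, Matrix.nonsing_inv_nonsing_inv _ hd1,
      Matrix.nonsing_inv_nonsing_inv _ hd2, hT, Matrix.mul_assoc]
  have hTS : T * (S₁ + S₂) = 1 := Matrix.nonsing_inv_mul _ hdS
  have hTS₁ : T * S₁ = 1 - T * S₂ := by
    rw [Matrix.mul_add] at hTS
    exact eq_sub_of_add_eq hTS
  have hTS₂ : T * S₂ = 1 - T * S₁ := by
    rw [Matrix.mul_add] at hTS
    exact eq_sub_of_add_eq (by rw [add_comm]; exact hTS)
  -- the four matrix identities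
  have hAB : A * M⁻¹ * B = T := by
    rw [hMinv2, hA, hB,
      show S₁⁻¹ * (S₁ * T * S₂) * S₂⁻¹ = (S₁⁻¹ * S₁) * T * (S₂ * S₂⁻¹) by noncomm_ring,
      Matrix.nonsing_inv_mul _ hd1, Matrix.mul_nonsing_inv _ hd2, Matrix.one_mul,
      Matrix.mul_one]
  have hBA : B * M⁻¹ * A = T := by
    rw [hMinv1, hA, hB,
      show S₂⁻¹ * (S₂ * T * S₁) * S₁⁻¹ = (S₂⁻¹ * S₂) * T * (S₁ * S₁⁻¹) by noncomm_ring,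
      Matrix.nonsing_inv_mul _ hd2, Matrix.mul_nonsing_inv _ hd1, Matrix.one_mul,
      Matrix.mul_one]
  have hAA : A * M⁻¹ * A = A - T := by
    rw [hMinv2, hA,
      show S₁⁻¹ * (S₁ * T * S₂) * S₁⁻¹ = (S₁⁻¹ * S₁) * ((T * S₂) * S₁⁻¹) by noncomm_ring,
      Matrix.nonsing_inv_mul _ hd1, Matrix.one_mul, hTS₂, Matrix.sub_mul, Matrix.one_mul,
      Matrix.mul_assoc, Matrix.mul_nonsing_inv _ hd1, Matrix.mul_one]
  have hBB : B * M⁻¹ * B = B - T := by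
    rw [hMinv1, hB,
      show S₂⁻¹ * (S₂ * T * S₁) * S₂⁻¹ = (S₂⁻¹ * S₂) * ((T * S₁) * S₂⁻¹) by noncomm_ring,
      Matrix.nonsing_inv_mul _ hd2, Matrix.one_mul, hTS₁, Matrix.sub_mul, Matrix.one_mul,
      Matrix.mul_assoc, Matrix.mul_nonsing_inv _ hd2, Matrix.mul_one]
  set bb : Fin d → ℝ := A *ᵥ μ₁ + B *ᵥ μ₂ with hbb
  -- pointwise exponent identity
  have hquad : ∀ x : Fin d → ℝ,
      (-(1/2) * ((x - μ₁) ⬝ᵥ (A *ᵥ (x - μ₁)))) + (-(1/2) * ((x - μ₂) ⬝ᵥ (B *ᵥ (x - μ₂))))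
      = (-(1/2) * (x ⬝ᵥ M *ᵥ x) + bb ⬝ᵥ x)
        + (-(1/2) * (μ₁ ⬝ᵥ A *ᵥ μ₁ + μ₂ ⬝ᵥ B *ᵥ μ₂)) := by
    intro x
    simp only [hbb, hM, sub_dotProduct, dotProduct_sub, Matrix.mulVec_sub,
      Matrix.add_mulVec, add_dotProduct, dotProduct_add]
    rw [dot_symm hAs μ₁ x, dot_symm hBs μ₂ x, dotProduct_comm (A *ᵥ μ₁) x,
      dotProduct_comm (B *ᵥ μ₂) x]
    ring
  -- integrand rewrite
  set K : ℝ := (Real.sqrt ((2 * π) ^ d * S₁.det))⁻¹ * (Real.sqrt ((2 * π) ^ d * S₂.det))⁻¹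
    * Real.exp (-(1/2) * (μ₁ ⬝ᵥ A *ᵥ μ₁ + μ₂ ⬝ᵥ B *ᵥ μ₂)) with hK
  have key : ∀ x : Fin d → ℝ,
      ((Real.sqrt ((2 * π) ^ d * S₁.det))⁻¹ *
        Real.exp (-(1 / 2) * ((x - μ₁) ⬝ᵥ (S₁⁻¹ *ᵥ (x - μ₁))))) *
      ((Real.sqrt ((2 * π) ^ d * S₂.det))⁻¹ *
        Real.exp (-(1 / 2) * ((x - μ₂) ⬝ᵥ (S₂⁻¹ *ᵥ (x - μ₂)))))
      = K * Real.exp (-(1/2) * (x ⬝ᵥ M *ᵥ x) + bb ⬝ᵥ x) := by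
    intro x
    rw [hK, show ∀ c₁ c₂ e₁ e₂ : ℝ, (c₁ * e₁) * (c₂ * e₂) = (c₁ * c₂) * (e₁ * e₂) from
      fun _ _ _ _ => by ring, ← Real.exp_add, ← hA, ← hB, hquad x, Real.exp_add]
    ring
  simp only [← hA, ← hB] at key
  simp only [key]
  rw [MeasureTheory.integral_const_mul, gauss_quad_linear d M hMpd bb]
  -- exponent identity
  have hexp : (-(1/2) * (μ₁ ⬝ᵥ A *ᵥ μ₁ + μ₂ ⬝ᵥ B *ᵥ μ₂)) + (1/2) * (bb ⬝ᵥ M⁻¹ *ᵥ bb)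
      = -(1/2) * ((μ₂ - μ₁) ⬝ᵥ (T *ᵥ (μ₂ - μ₁))) := by
    have e1 : (A *ᵥ μ₁) ⬝ᵥ (M⁻¹ *ᵥ (A *ᵥ μ₁)) = μ₁ ⬝ᵥ A *ᵥ μ₁ - μ₁ ⬝ᵥ T *ᵥ μ₁ := by
      rw [mulVec_dot hAs, Matrix.mulVec_mulVec, Matrix.mulVec_mulVec, hAA,
        Matrix.sub_mulVec, dotProduct_sub]
    have e2 : (A *ᵥ μ₁) ⬝ᵥ (M⁻¹ *ᵥ (B *ᵥ μ₂)) = μ₁ ⬝ᵥ T *ᵥ μ₂ := by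
      rw [mulVec_dot hAs, Matrix.mulVec_mulVec, Matrix.mulVec_mulVec, hAB]
    have e3 : (B *ᵥ μ₂) ⬝ᵥ (M⁻¹ *ᵥ (A *ᵥ μ₁)) = μ₁ ⬝ᵥ T *ᵥ μ₂ := by
      rw [mulVec_dot hBs, Matrix.mulVec_mulVec, Matrix.mulVec_mulVec, hBA, dot_symm hTs]
    have e4 : (B *ᵥ μ₂) ⬝ᵥ (M⁻¹ *ᵥ (B *ᵥ μ₂)) = μ₂ ⬝ᵥ B *ᵥ μ₂ - μ₂ ⬝ᵥ T *ᵥ μ₂ := by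
      rw [mulVec_dot hBs, Matrix.mulVec_mulVec, Matrix.mulVec_mulVec, hBB,
        Matrix.sub_mulVec, dotProduct_sub]
    rw [hbb]
    simp only [add_dotProduct, Matrix.mulVec_add, dotProduct_add, e1, e2, e3, e4]
    rw [sub_dotProduct, Matrix.mulVec_sub, dotProduct_sub, dotProduct_sub,
      dot_symm hTs μ₂ μ₁]
    ring
  -- determinant of M
  have hdetM : M.det = (S₁ + S₂).det / (S₁.det * S₂.det) := by
    rw [hM1, Matrix.det_mul, Matrix.det_mul, Matrix.det_nonsing_inv, Matrix.det_nonsing_inv,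
      Ring.inverse_eq_inv']
    field_simp
  -- positivity
  have hp : (0:ℝ) < (2 * π) ^ d := by positivity
  have hps1 : (0:ℝ) < S₁.det := h₁.det_pos
  have hps2 : (0:ℝ) < S₂.det := h₂.det_pos
  have hpsS : (0:ℝ) < (S₁ + S₂).det := hSpd.det_pos
  -- constant identity
  have hconst : (Real.sqrt ((2 * π) ^ d * S₁.det))⁻¹ * (Real.sqrt ((2 * π) ^ d * S₂.det))⁻¹
      * Real.sqrt ((2 * π) ^ d / M.det) = (Real.sqrt ((2 * π) ^ d * (S₁ + S₂).det))⁻¹ := by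
    rw [hdetM, ← Real.sqrt_inv, ← Real.sqrt_inv, ← Real.sqrt_inv,
      ← Real.sqrt_mul (by positivity), ← Real.sqrt_mul (by positivity)]
    congr 1
    field_simp
  calc K * (Real.sqrt ((2 * π) ^ d / M.det) * Real.exp ((1/2) * (bb ⬝ᵥ M⁻¹ *ᵥ bb)))
      = ((Real.sqrt ((2 * π) ^ d * S₁.det))⁻¹ * (Real.sqrt ((2 * π) ^ d * S₂.det))⁻¹
        * Real.sqrt ((2 * π) ^ d / M.det))
        * Real.exp ((-(1/2) * (μ₁ ⬝ᵥ A *ᵥ μ₁ + μ₂ ⬝ᵥ B *ᵥ μ₂)) + (1/2) * (bb ⬝ᵥ M⁻¹ *ᵥ bb)) := by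
        rw [hK, Real.exp_add]; ring
    _ = (Real.sqrt ((2 * π) ^ d * (S₁ + S₂).det))⁻¹ *
        Real.exp (-(1/2) * ((μ₂ - μ₁) ⬝ᵥ ((S₁ + S₂)⁻¹ *ᵥ (μ₂ - μ₁)))) := by
        rw [hconst, hexp, hT]


/-- Closed-form expression of the Cauchy-Schwarz divergence
D_CS(p;q) = −log((∫ pq)²/(∫ p² ∫ q²)) between two multivariate Gaussian densities. -/
theorem cs_divergence_gaussians_closed_form (d : ℕ) (hd : 1 ≤ d) (μ₁ μ₂ : Fin d → ℝ)
    (S₁ S₂ : Matrix (Fin d) (Fin d) ℝ) (h₁ : S₁.PosDef) (h₂ : S₂.PosDef)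
    (p q : (Fin d → ℝ) → ℝ)
    (hp : p = fun x => (Real.sqrt ((2 * Real.pi) ^ d * S₁.det))⁻¹ *
      Real.exp (-(1 / 2) * ((x - μ₁) ⬝ᵥ (S₁⁻¹ *ᵥ (x - μ₁)))))
    (hq : q = fun x => (Real.sqrt ((2 * Real.pi) ^ d * S₂.det))⁻¹ *
      Real.exp (-(1 / 2) * ((x - μ₂) ⬝ᵥ (S₂⁻¹ *ᵥ (x - μ₂))))) :
    -Real.log ((∫ x, p x * q x ∂volume) ^ 2 /
        ((∫ x, p x ^ 2 ∂volume) * (∫ x, q x ^ 2 ∂volume)))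
      = (μ₂ - μ₁) ⬝ᵥ ((S₁ + S₂)⁻¹ *ᵥ (μ₂ - μ₁))
        + Real.log ((S₁ + S₂).det / (2 ^ d * Real.sqrt (S₁.det * S₂.det))) := by
  classical
  subst hp hq
  set t : ℝ := (μ₂ - μ₁) ⬝ᵥ ((S₁ + S₂)⁻¹ *ᵥ (μ₂ - μ₁)) with ht
  have hdet2 : ∀ (S : Matrix (Fin d) (Fin d) ℝ), (S + S).det = 2 ^ d * S.det := by
    intro S
    rw [← two_smul ℝ S, Matrix.det_smul, Fintype.card_fin]
  have I12 : (∫ x : Fin d → ℝ,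
      ((Real.sqrt ((2 * π) ^ d * S₁.det))⁻¹ *
        Real.exp (-(1 / 2) * ((x - μ₁) ⬝ᵥ (S₁⁻¹ *ᵥ (x - μ₁))))) *
      ((Real.sqrt ((2 * π) ^ d * S₂.det))⁻¹ *
        Real.exp (-(1 / 2) * ((x - μ₂) ⬝ᵥ (S₂⁻¹ *ᵥ (x - μ₂))))) ∂volume)
      = (Real.sqrt ((2 * π) ^ d * (S₁ + S₂).det))⁻¹ * Real.exp (-(1/2) * t) :=
    gauss_prod d μ₁ μ₂ S₁ S₂ h₁ h₂
  have I11 : (∫ x : Fin d → ℝ,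
      ((Real.sqrt ((2 * π) ^ d * S₁.det))⁻¹ *
        Real.exp (-(1 / 2) * ((x - μ₁) ⬝ᵥ (S₁⁻¹ *ᵥ (x - μ₁))))) ^ 2 ∂volume)
      = (Real.sqrt ((2 * π) ^ d * (2 ^ d * S₁.det)))⁻¹ := by
    simp only [pow_two]
    rw [gauss_prod d μ₁ μ₁ S₁ S₁ h₁ h₁, hdet2, sub_self]
    simp
  have I22 : (∫ x : Fin d → ℝ,
      ((Real.sqrt ((2 * π) ^ d * S₂.det))⁻¹ *
        Real.exp (-(1 / 2) * ((x - μ₂) ⬝ᵥ (S₂⁻¹ *ᵥ (x - μ₂))))) ^ 2 ∂volume)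
      = (Real.sqrt ((2 * π) ^ d * (2 ^ d * S₂.det)))⁻¹ := by
    simp only [pow_two]
    rw [gauss_prod d μ₂ μ₂ S₂ S₂ h₂ h₂, hdet2, sub_self]
    simp
  rw [I12, I11, I22]
  have hπ : (0:ℝ) < (2 * π) ^ d := by positivity
  have hd1 : (0:ℝ) < S₁.det := h₁.det_pos
  have hd2 : (0:ℝ) < S₂.det := h₂.det_pos
  have hdS : (0:ℝ) < (S₁ + S₂).det := (h₁.add h₂).det_pos
  set P : ℝ := (2 * π) ^ d with hP
  have l1 : Real.log (((Real.sqrt (P * (S₁ + S₂).det))⁻¹ * Real.exp (-(1/2) * t)) ^ 2)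
      = 2 * (-(1/2) * (Real.log P + Real.log (S₁ + S₂).det) + (-(1/2) * t)) := by
    rw [Real.log_pow, Real.log_mul (by positivity) (Real.exp_ne_zero _), Real.log_inv,
      Real.log_sqrt (by positivity), Real.log_exp, Real.log_mul (by positivity) hdS.ne']
    push_cast; ring
  have logsq : ∀ c : ℝ, 0 < c → Real.log ((Real.sqrt (P * (2 ^ d * c)))⁻¹)
      = -(1/2) * (Real.log P + Real.log ((2:ℝ) ^ d) + Real.log c) := by
    intro c hc
    rw [Real.log_inv, Real.log_sqrt (by positivity),
      Real.log_mul (by positivity) (by positivity), Real.log_mul (by positivity) hc.ne']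
    ring
  have l2 : Real.log ((Real.sqrt (P * (2 ^ d * S₁.det)))⁻¹ *
        (Real.sqrt (P * (2 ^ d * S₂.det)))⁻¹)
      = -(1/2) * ((Real.log P + Real.log ((2:ℝ) ^ d) + Real.log S₁.det)
          + (Real.log P + Real.log ((2:ℝ) ^ d) + Real.log S₂.det)) := by
    rw [Real.log_mul (by positivity) (by positivity), logsq _ hd1, logsq _ hd2]
    ring
  rw [Real.log_div (by positivity) (by positivity), l1, l2,
    Real.log_div hdS.ne' (by positivity), Real.log_mul (by positivity) (by positivity),
    Real.log_sqrt (by positivity), Real.log_mul hd1.ne' hd2.ne']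
  ring
end
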